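/- arXiv:1912.07042 — 2 statements merged into one kernel-verified Lean document; each statement's English description precedes it below -/
import Mathlib

section
/- For every saturation sequence I = S_0 ⊊ S_1 ⊊ ⋯ ⊊ S_i of a broadcast protocol B with costs c_0, c_1, …, c_i, there exist an initial configuration γ_0, a configuration γ = (N, E, L), and a reconfigurable execution ρ : γ_0 →_R* γ such that the set of labels appearing in γ is exactly S_i, the size of ρ is c_i, and every node n satisfies a_ρ(n) ≤ i. -/
/-- A broadcast protocol over finite state set `Q` and finite message alphabet `M`.
`I` is the set of initial states, `br q m q'` means `(q, !!m, q') ∈ Δ` (a broadcast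
transition) and `rcv q m q'` means `(q, ??m, q') ∈ Δ` (a reception transition).
The protocol is complete for receptions. -/
structure BroadcastProtocol (Q M : Type) [Fintype Q] [DecidableEq Q] [Fintype M] where
  I : Finset Q
  br : Q → M → Q → Prop
  rcv : Q → M → Q → Prop
  complete : ∀ q m, ∃ q', rcv q m q'

section Execs
variable {Q M : Type} [Fintype Q] [DecidableEq Q] [Fintype M]

/-- A reconfigurable execution of length `r` over the finite node type `ν`:
`lab i v` is the state of node `v` in the `i`-th configuration, `edges i` is the
(symmetric, irreflexive) communication topology of the `i`-th configuration,
and in the `i`-th step node `sender i` broadcasts message `msg i` to its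
neighbours; the topology may change arbitrarily at each step. -/
structure RExec (P : BroadcastProtocol Q M) (ν : Type) [Fintype ν] [DecidableEq ν]
    (r : ℕ) where
  lab : Fin (r + 1) → ν → Q
  edges : Fin (r + 1) → ν → ν → Prop
  edges_symm : ∀ i, Symmetric (edges i)
  edges_irrefl : ∀ i, Irreflexive (edges i)
  sender : Fin r → ν
  msg : Fin r → M
  init : ∀ v, lab 0 v ∈ P.I
  step_br : ∀ i : Fin r, P.br (lab i.castSucc (sender i)) (msg i) (lab i.succ (sender i))
  step_rcv : ∀ i : Fin r, ∀ v, v ≠ sender i →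
    (edges i.castSucc (sender i) v → P.rcv (lab i.castSucc v) (msg i) (lab i.succ v)) ∧
    (¬ edges i.castSucc (sender i) v → lab i.succ v = lab i.castSucc v)

namespace RExec

variable {P : BroadcastProtocol Q M} {ν : Type} [Fintype ν] [DecidableEq ν] {r : ℕ}

/-- Labelling of the last configuration. -/
def lastLab (ρ : RExec P ν r) : ν → Q := ρ.lab (Fin.last r)

/-- The execution covers `F` if a node of the last configuration is labelled in `F`. -/
def Covers (ρ : RExec P ν r) (F : Set Q) : Prop := ∃ v, ρ.lastLab v ∈ F

/-- The active length of node `v`: the number of steps in which `v` broadcasts. -/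
def activeLen (ρ : RExec P ν r) (v : ν) : ℕ :=
  (Finset.univ.filter fun i : Fin r => ρ.sender i = v).card

end RExec

end Execs
/-- `IsSatSeq P len S c` says that `S 0, …, S len` is a saturation sequence with
costs `c 0, …, c len`, as produced by the refined saturation algorithm. -/
def IsSatSeq {Q M : Type} [Fintype Q] [DecidableEq Q] [Fintype M]
    (P : BroadcastProtocol Q M) (len : ℕ) (S : ℕ → Finset Q) (c : ℕ → ℕ) : Prop :=
  S 0 = P.I ∧ c 0 = P.I.card ∧
  ∀ j < len, ∃ q', q' ∉ S j ∧ S (j + 1) = insert q' (S j) ∧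
    ((∃ q ∈ S j, ∃ m, P.br q m q' ∧ c (j + 1) = c j + 1) ∨
     (∃ q ∈ S j, ∃ q'' ∈ S j, ∃ p ∈ S j, ∃ m,
        P.br q m q'' ∧ P.rcv p m q' ∧ c (j + 1) = c j + 2))


section AuxExecs
variable {Q M : Type} [Fintype Q] [DecidableEq Q] [Fintype M]
namespace RExec
variable {P : BroadcastProtocol Q M} {ν : Type} [Fintype ν] [DecidableEq ν] {r : ℕ}

/-- The trivial execution of length 0. -/
def ofInit (P : BroadcastProtocol Q M) (L : ν → Q) (h : ∀ v, L v ∈ P.I) :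
    RExec P ν 0 where
  lab _ := L
  edges _ _ _ := False
  edges_symm _ := fun _ _ h => h.elim
  edges_irrefl _ := fun _ h => h
  sender i := i.elim0
  msg i := i.elim0
  init := h
  step_br i := i.elim0
  step_rcv i := i.elim0

@[simp] lemma ofInit_lastLab (L : ν → Q) (h : ∀ v, L v ∈ P.I) :
    (ofInit P L h).lastLab = L := rfl

@[simp] lemma ofInit_activeLen (L : ν → Q) (h : ∀ v, L v ∈ P.I) (v : ν) :
    (ofInit P L h).activeLen v = 0 := by
  simp [activeLen]

/-- Append one step to an execution. -/
def snoc (ρ : RExec P ν r) (E : ν → ν → Prop) (hsymm : Symmetric E) (hirr : Irreflexive E)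
    (v : ν) (m : M) (L' : ν → Q)
    (hbr : P.br (ρ.lastLab v) m (L' v))
    (hrcv : ∀ w, w ≠ v → (E v w → P.rcv (ρ.lastLab w) m (L' w)) ∧
      (¬ E v w → L' w = ρ.lastLab w)) :
    RExec P ν (r + 1) where
  lab i := if h : (i : ℕ) ≤ r then ρ.lab ⟨i, Nat.lt_succ_of_le h⟩ else L'
  edges i := if h : (i : ℕ) < r then ρ.edges ⟨i, Nat.lt_succ_of_lt h⟩
    else if (i : ℕ) = r then E else fun _ _ => False
  edges_symm i := by
    split
    · exact ρ.edges_symm _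
    · split
      · exact hsymm
      · exact fun _ _ h => h.elim
  edges_irrefl i := by
    split
    · exact ρ.edges_irrefl _
    · split
      · exact hirr
      · exact fun _ h => h
  sender i := if h : (i : ℕ) < r then ρ.sender ⟨i, h⟩ else v
  msg i := if h : (i : ℕ) < r then ρ.msg ⟨i, h⟩ else m
  init w := by
    simpa using ρ.init w
  step_br i := by
    simp only [Fin.coe_castSucc, Fin.val_succ]
    by_cases h : (i : ℕ) < r
    · have h1 : (i : ℕ) ≤ r := le_of_lt h
      have h2 : (i : ℕ) + 1 ≤ r := h
      rw [dif_pos h, dif_pos h, dif_pos h1, dif_pos h2]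
      exact ρ.step_br ⟨i, h⟩
    · have hi : (i : ℕ) = r := le_antisymm (Nat.lt_succ_iff.mp i.isLt) (not_lt.mp h)
      have h1 : (i : ℕ) ≤ r := le_of_eq hi
      have h2 : ¬ (i : ℕ) + 1 ≤ r := by simp [hi]
      rw [dif_neg h, dif_neg h, dif_pos h1, dif_neg h2]
      have : (⟨(i : ℕ), Nat.lt_succ_of_le h1⟩ : Fin (r + 1)) = Fin.last r := by
        ext; exact hi
      rw [this]
      exact hbr
  step_rcv i w hw := by
    simp only [Fin.coe_castSucc, Fin.val_succ] at hw ⊢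
    by_cases h : (i : ℕ) < r
    · rw [dif_pos h] at hw
      have h1 : (i : ℕ) ≤ r := le_of_lt h
      have h2 : (i : ℕ) + 1 ≤ r := h
      rw [dif_pos h, dif_pos h1, dif_pos h2, dif_pos h, dif_pos h]
      exact ρ.step_rcv ⟨i, h⟩ w hw
    · rw [dif_neg h] at hw
      have hi : (i : ℕ) = r := le_antisymm (Nat.lt_succ_iff.mp i.isLt) (not_lt.mp h)
      have h1 : (i : ℕ) ≤ r := le_of_eq hi
      have h2 : ¬ (i : ℕ) + 1 ≤ r := by simp [hi]
      rw [dif_neg h, dif_pos h1, dif_neg h2, dif_neg h, dif_neg h, if_pos hi]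
      have : (⟨(i : ℕ), Nat.lt_succ_of_le h1⟩ : Fin (r + 1)) = Fin.last r := by
        ext; exact hi
      rw [this]
      exact hrcv w hw

@[simp] lemma snoc_lastLab (ρ : RExec P ν r) (E hsymm hirr v m L' hbr hrcv) :
    (ρ.snoc E hsymm hirr v m L' hbr hrcv).lastLab = L' := by
  funext w
  simp [lastLab, snoc, Fin.last]

lemma snoc_activeLen (ρ : RExec P ν r) (E hsymm hirr v m L' hbr hrcv) (w : ν) :
    (ρ.snoc E hsymm hirr v m L' hbr hrcv).activeLen w
      = ρ.activeLen w + (if v = w then 1 else 0) := by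
  unfold activeLen
  rw [Finset.card_filter, Finset.card_filter, Fin.sum_univ_castSucc]
  congr 1
  · apply Finset.sum_congr rfl
    intro j _
    have hs : (ρ.snoc E hsymm hirr v m L' hbr hrcv).sender j.castSucc = ρ.sender j := by
      simp only [snoc, Fin.coe_castSucc]
      rw [dif_pos j.isLt]
    rw [hs]
  · have hs : (ρ.snoc E hsymm hirr v m L' hbr hrcv).sender (Fin.last r) = v := by
      simp only [snoc, Fin.val_last]
      rw [dif_neg (lt_irrefl r)]
    rw [hs]

/-- Drop the last step of an execution. -/
def dropLast (ρ : RExec P ν (r + 1)) : RExec P ν r where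
  lab i := ρ.lab i.castSucc
  edges i := ρ.edges i.castSucc
  edges_symm i := ρ.edges_symm _
  edges_irrefl i := ρ.edges_irrefl _
  sender i := ρ.sender i.castSucc
  msg i := ρ.msg i.castSucc
  init v := ρ.init v
  step_br i := by
    have h2 : ((i.succ : Fin (r + 1)).castSucc : Fin (r + 2)) = (i.castSucc : Fin (r + 1)).succ := by
      ext; simp
    rw [h2]
    exact ρ.step_br i.castSucc
  step_rcv i w hw := by
    have h2 : ((i.succ : Fin (r + 1)).castSucc : Fin (r + 2)) = (i.castSucc : Fin (r + 1)).succ := by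
      ext; simp
    rw [h2]
    exact ρ.step_rcv i.castSucc w hw

lemma dropLast_lastLab (ρ : RExec P ν (r + 1)) :
    ρ.dropLast.lastLab = ρ.lab (Fin.last r).castSucc := rfl

lemma activeLen_succ (ρ : RExec P ν (r + 1)) (w : ν) :
    ρ.activeLen w = ρ.dropLast.activeLen w
      + (if ρ.sender (Fin.last r) = w then 1 else 0) := by
  unfold activeLen
  rw [Finset.card_filter, Finset.card_filter, Fin.sum_univ_castSucc]
  rfl

/-- Add a clone of node `v` to an execution. -/
lemma clone : ∀ (r : ℕ) (ρ : RExec P ν r) (v : ν),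
    ∃ (r' : ℕ) (ρ' : RExec P (Option ν) r'),
      (∀ w, ρ'.lastLab (some w) = ρ.lastLab w) ∧
      ρ'.lastLab none = ρ.lastLab v ∧
      (∀ w, ρ'.activeLen (some w) = ρ.activeLen w) ∧
      ρ'.activeLen none = ρ.activeLen v := by
  intro r
  induction r with
  | zero =>
    intro ρ v
    have hz : ∀ {ν' : Type} [Fintype ν'] [DecidableEq ν'] (σ : RExec P ν' 0) (x : ν'),
        σ.activeLen x = 0 := fun σ x => by simp [activeLen]
    exact ⟨0, ofInit P (fun o => ρ.lab 0 (o.getD v)) (fun o => ρ.init _),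
      fun w => rfl, rfl, fun w => by rw [hz, hz], by rw [hz, hz]⟩
  | succ r ih =>
    intro ρ v
    obtain ⟨r', ρ', hl, hln, ha, han⟩ := ih ρ.dropLast v
    set s := ρ.sender (Fin.last r) with hs
    set m := ρ.msg (Fin.last r) with hm
    set E := ρ.edges (Fin.last r).castSucc with hE
    have Esymm : Symmetric E := by rw [hE]; exact ρ.edges_symm _
    have Eirr : Irreflexive E := by rw [hE]; exact ρ.edges_irrefl _
    have hbr0 : P.br (ρ.lab (Fin.last r).castSucc s) m (ρ.lastLab s) := by
      have := ρ.step_br (Fin.last r)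
      rwa [show (Fin.last r).succ = Fin.last (r + 1) from rfl] at this
    have hrcv0 : ∀ w, w ≠ s →
        (E s w → P.rcv (ρ.lab (Fin.last r).castSucc w) m (ρ.lastLab w)) ∧
        (¬ E s w → ρ.lastLab w = ρ.lab (Fin.last r).castSucc w) := by
      intro w hw
      have := ρ.step_rcv (Fin.last r) w hw
      rwa [show (Fin.last r).succ = Fin.last (r + 1) from rfl] at this
    by_cases hsv : s = v
    · -- the cloned node is the sender: two extra steps
      -- step 1: `some s` broadcasts, none isolated
      set E₁ : Option ν → Option ν → Prop :=
        fun a b => ∃ x y, a = some x ∧ b = some y ∧ E x y with hE₁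
      have hsymm₁ : Symmetric E₁ := by
        rintro a b ⟨x, y, rfl, rfl, hxy⟩
        exact ⟨y, x, rfl, rfl, Esymm hxy⟩
      have hirr₁ : Irreflexive E₁ := by
        rintro a ⟨x, y, rfl, h1, hxy⟩
        rw [Option.some_inj] at h1
        subst h1
        exact Eirr _ hxy
      set L₁ : Option ν → Q := fun o => o.elim (ρ'.lastLab none) ρ.lastLab with hL₁
      have hbr₁ : P.br (ρ'.lastLab (some s)) m (L₁ (some s)) := by
        rw [hl s]
        exact hbr0
      have hrcv₁ : ∀ w, w ≠ some s → (E₁ (some s) w → P.rcv (ρ'.lastLab w) m (L₁ w)) ∧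
          (¬ E₁ (some s) w → L₁ w = ρ'.lastLab w) := by
        rintro (_ | w) hw
        · constructor
          · rintro ⟨x, y, _, hc, _⟩; exact absurd hc (by simp)
          · intro _; rfl
        · have hws : w ≠ s := fun hc => hw (by rw [hc])
          constructor
          · rintro ⟨x, y, hx, hy, hxy⟩
            rw [Option.some_inj] at hx hy
            subst hx; subst hy
            rw [hl w]
            exact (hrcv0 w hws).1 hxy
          · intro hne
            have : ¬ E s w := fun hc => hne ⟨s, w, rfl, rfl, hc⟩
            simp only [hL₁, Option.elim, hl w]
            exact (hrcv0 w hws).2 this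
      set ρ₁ := ρ'.snoc E₁ hsymm₁ hirr₁ (some s) m L₁ hbr₁ hrcv₁ with hρ₁
      -- step 2: none broadcasts alone
      have hbr₂ : P.br (ρ₁.lastLab none) m
          ((fun o => o.elim (ρ.lastLab v) ρ.lastLab) (none : Option ν)) := by
        rw [hρ₁, snoc_lastLab]
        simp only [hL₁, Option.elim]
        rw [hln, dropLast_lastLab]
        rw [← hsv]
        exact hbr0
      have hrcv₂ : ∀ w, w ≠ (none : Option ν) →
          ((fun _ _ => False) (none : Option ν) w →
            P.rcv (ρ₁.lastLab w) m ((fun o => o.elim (ρ.lastLab v) ρ.lastLab) w)) ∧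
          (¬ (fun _ _ => False) (none : Option ν) w →
            (fun o => o.elim (ρ.lastLab v) ρ.lastLab) w = ρ₁.lastLab w) := by
        rintro (_ | w) hw
        · exact absurd rfl hw
        · refine ⟨fun hc => hc.elim, fun _ => ?_⟩
          rw [hρ₁, snoc_lastLab]
          simp [hL₁]
      have hsF : Symmetric (fun _ _ : Option ν => False) := fun _ _ h => h.elim
      have hiF : Irreflexive (fun _ _ : Option ν => False) := fun _ h => h
      refine ⟨r' + 2, ρ₁.snoc (fun _ _ => False) hsF hiF
        none m (fun o => o.elim (ρ.lastLab v) ρ.lastLab) hbr₂ hrcv₂, ?_, ?_, ?_, ?_⟩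
      · intro w; rw [snoc_lastLab]; rfl
      · rw [snoc_lastLab]; rfl

      · intro w
        rw [snoc_activeLen, hρ₁, snoc_activeLen, ha w, activeLen_succ ρ w]
        simp only [if_neg (fun hc : (none : Option ν) = some w => nomatch hc)]
        by_cases hsw : s = w
        · rw [if_pos (by rw [hsw]), if_pos hsw]
        · rw [if_neg (fun hc : (some s : Option ν) = some w => hsw (Option.some_inj.mp hc)),
            if_neg hsw]
      · rw [snoc_activeLen, hρ₁, snoc_activeLen, han, activeLen_succ ρ v]
        rw [if_neg (fun hc : (some s : Option ν) = none => nomatch hc),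
          if_pos rfl, if_pos hsv]
    · -- sender is a different node: one extra step, clone listens like `v`
      set E₁ : Option ν → Option ν → Prop :=
        fun a b => E (a.getD v) (b.getD v) ∧ a ≠ b with hE₁
      have hsymm₁ : Symmetric E₁ := fun a b h => ⟨Esymm h.1, h.2.symm⟩
      have hirr₁ : Irreflexive E₁ := fun a h => h.2 rfl
      set L₁ : Option ν → Q := fun o => ρ.lastLab (o.getD v) with hL₁
      have hbr₁ : P.br (ρ'.lastLab (some s)) m (L₁ (some s)) := by
        rw [hl s]; exact hbr0
      have hrcv₁ : ∀ w, w ≠ some s →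
          (E₁ (some s) w → P.rcv (ρ'.lastLab w) m (L₁ w)) ∧
          (¬ E₁ (some s) w → L₁ w = ρ'.lastLab w) := by
        rintro (_ | w) hw
        · rw [hln, dropLast_lastLab]
          constructor
          · rintro ⟨he, _⟩
            exact (hrcv0 v (fun hc => hsv hc.symm)).1 he
          · intro hne
            have : ¬ E s v := fun hc => hne ⟨hc, fun h => nomatch h⟩
            exact (hrcv0 v (fun hc => hsv hc.symm)).2 this
        · have hws : w ≠ s := fun hc => hw (by rw [hc])
          rw [hl w]
          constructor
          · rintro ⟨he, _⟩
            exact (hrcv0 w hws).1 he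
          · intro hne
            have : ¬ E s w := fun hc =>
              hne ⟨hc, fun h => hws (Option.some_inj.mp h).symm⟩
            exact (hrcv0 w hws).2 this
      refine ⟨r' + 1, ρ'.snoc E₁ hsymm₁ hirr₁ (some s) m L₁ hbr₁ hrcv₁, ?_, ?_, ?_, ?_⟩
      · intro w; rw [snoc_lastLab]; simp [hL₁]
      · rw [snoc_lastLab]; simp [hL₁]
      · intro w
        rw [snoc_activeLen, ha w, activeLen_succ ρ w]
        by_cases hsw : s = w
        · rw [if_pos (by rw [hsw]), if_pos hsw]
        · rw [if_neg (fun hc : (some s : Option ν) = some w => hsw (Option.some_inj.mp hc)),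
            if_neg hsw]
      · rw [snoc_activeLen, han, activeLen_succ ρ v,
          if_neg (fun hc : (some s : Option ν) = none => nomatch hc),
          if_neg hsv]

/-- Relabel the nodes along an equivalence. -/
def reindex {ν' : Type} [Fintype ν'] [DecidableEq ν'] (e : ν' ≃ ν) (ρ : RExec P ν r) :
    RExec P ν' r where
  lab i w := ρ.lab i (e w)
  edges i w w' := ρ.edges i (e w) (e w')
  edges_symm i _ _ h := ρ.edges_symm i h
  edges_irrefl i w h := ρ.edges_irrefl i (e w) h
  sender i := e.symm (ρ.sender i)
  msg := ρ.msg
  init w := ρ.init (e w)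
  step_br i := by simpa using ρ.step_br i
  step_rcv i w hw := by
    have hw' : e w ≠ ρ.sender i := by
      intro hc
      apply hw
      show w = e.symm (ρ.sender i)
      rw [← hc, Equiv.symm_apply_apply]
    simpa using ρ.step_rcv i (e w) hw'

lemma reindex_lastLab {ν' : Type} [Fintype ν'] [DecidableEq ν'] (e : ν' ≃ ν)
    (ρ : RExec P ν r) (w : ν') : (ρ.reindex e).lastLab w = ρ.lastLab (e w) := rfl

lemma reindex_activeLen {ν' : Type} [Fintype ν'] [DecidableEq ν'] (e : ν' ≃ ν)
    (ρ : RExec P ν r) (w : ν') : (ρ.reindex e).activeLen w = ρ.activeLen (e w) := by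
  unfold activeLen
  congr 1
  apply Finset.filter_congr
  intro i _
  simp [reindex, Equiv.symm_apply_eq]

end RExec
end AuxExecs

/-- For every saturation sequence `I = S 0 ⊊ ⋯ ⊊ S i` with costs `c 0, …, c i`,
there is a reconfigurable execution with exactly `c i` nodes whose last configuration
has exactly `S i` as its set of labels, and in which every node broadcasts at most
`i` times. -/
theorem satseq_reconfigurable_exec
    {Q M : Type} [Fintype Q] [DecidableEq Q] [Fintype M] (P : BroadcastProtocol Q M)
    (i : ℕ) (S : ℕ → Finset Q) (c : ℕ → ℕ) (h : IsSatSeq P i S c) :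
    ∃ (r : ℕ) (ρ : RExec P (Fin (c i)) r),
      (∀ v, ρ.lastLab v ∈ S i) ∧
      (∀ q ∈ S i, ∃ v, ρ.lastLab v = q) ∧
      (∀ v, ρ.activeLen v ≤ i) := by
  obtain ⟨hS0, hc0, hstep⟩ := h
  suffices H : ∀ j, j ≤ i → ∃ (r : ℕ) (ρ : RExec P (Fin (c j)) r),
      (∀ v, ρ.lastLab v ∈ S j) ∧ (∀ q ∈ S j, ∃ v, ρ.lastLab v = q) ∧
      (∀ v, ρ.activeLen v ≤ j) from H i le_rfl
  intro j
  induction j with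
  | zero =>
    intro _
    have e : Fin (c 0) ≃ {x // x ∈ P.I} := (finCongr hc0).trans P.I.equivFin.symm
    refine ⟨0, RExec.ofInit P (fun v => (e v : Q)) (fun v => (e v).2), ?_, ?_, ?_⟩
    · intro v
      rw [hS0]
      exact (e v).2
    · intro q hq
      rw [hS0] at hq
      refine ⟨e.symm ⟨q, hq⟩, ?_⟩
      show ((e (e.symm ⟨q, hq⟩)) : Q) = q
      rw [Equiv.apply_symm_apply]
    · intro v
      rw [RExec.ofInit_activeLen]
  | succ j ihj =>
    intro hji
    have hj : j < i := Nat.lt_of_succ_le hji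
    obtain ⟨r, ρ, hmem, hsur, hact⟩ := ihj (le_of_lt hj)
    obtain ⟨q', hq', hSj, hcase⟩ := hstep j hj
    rcases hcase with ⟨q, hq, m, hbr, hc⟩ | ⟨q, hq, q'', hq'', p, hp, m, hbr, hrc, hc⟩
    · -- broadcast case
      obtain ⟨v, hv⟩ := hsur q hq
      obtain ⟨r', ρ', hl, hln, ha, han⟩ := RExec.clone r ρ v
      have hbr' : P.br (ρ'.lastLab none) m
          ((fun o => o.elim q' ρ.lastLab) (none : Option (Fin (c j)))) := by
        rw [hln, hv]
        exact hbr
      have hrcv' : ∀ w, w ≠ (none : Option (Fin (c j))) →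
          ((fun _ _ => False) (none : Option (Fin (c j))) w →
            P.rcv (ρ'.lastLab w) m ((fun o => o.elim q' ρ.lastLab) w)) ∧
          (¬ (fun _ _ => False) (none : Option (Fin (c j))) w →
            (fun o => o.elim q' ρ.lastLab) w = ρ'.lastLab w) := by
        rintro (_ | w) hw
        · exact absurd rfl hw
        · exact ⟨fun hc => hc.elim, fun _ => (hl w).symm⟩
      set ρ₂ := ρ'.snoc (fun _ _ => False) (show Symmetric (fun _ _ : Option (Fin (c j)) => False) from fun _ _ h => h.elim) (show Irreflexive (fun _ _ : Option (Fin (c j)) => False) from fun _ h => h)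
        none m (fun o => o.elim q' ρ.lastLab) hbr' hrcv' with hρ₂
      have e : Fin (c (j + 1)) ≃ Option (Fin (c j)) :=
        (finCongr hc).trans (finSuccEquiv (c j))
      refine ⟨r' + 1, ρ₂.reindex e, ?_, ?_, ?_⟩
      · intro w
        rw [RExec.reindex_lastLab, hρ₂, RExec.snoc_lastLab, hSj]
        rcases e w with _ | u
        · exact Finset.mem_insert_self _ _
        · exact Finset.mem_insert_of_mem (hmem u)
      · intro x hx
        rw [hSj] at hx
        rcases Finset.mem_insert.mp hx with rfl | hx
        · refine ⟨e.symm none, ?_⟩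
          rw [RExec.reindex_lastLab, hρ₂, RExec.snoc_lastLab, Equiv.apply_symm_apply]
          rfl
        · obtain ⟨u, hu⟩ := hsur x hx
          refine ⟨e.symm (some u), ?_⟩
          rw [RExec.reindex_lastLab, hρ₂, RExec.snoc_lastLab, Equiv.apply_symm_apply]
          exact hu
      · intro w
        rw [RExec.reindex_activeLen, hρ₂, RExec.snoc_activeLen]
        rcases hew : e w with _ | u
        · rw [if_pos rfl, han]
          exact Nat.add_le_add (hact v) le_rfl
        · rw [if_neg (fun hcon : (none : Option (Fin (c j))) = some u =>
            nomatch hcon), ha u]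
          exact le_trans (Nat.le_succ_of_le (hact u)) (by omega)
    · -- reception case
      obtain ⟨vq, hvq⟩ := hsur q hq
      obtain ⟨vp, hvp⟩ := hsur p hp
      obtain ⟨r1, ρ1, hl1, hln1, ha1, han1⟩ := RExec.clone r ρ vp
      obtain ⟨r2, ρ2, hl2, hln2, ha2, han2⟩ := RExec.clone r1 ρ1 (some vq)
      set E2 : Option (Option (Fin (c j))) → Option (Option (Fin (c j))) → Prop :=
        fun a b => (a = none ∧ b = some none) ∨ (a = some none ∧ b = none) with hE2
      have hsymm2 : Symmetric E2 := by
        rintro a b (⟨rfl, rfl⟩ | ⟨rfl, rfl⟩)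
        · exact Or.inr ⟨rfl, rfl⟩
        · exact Or.inl ⟨rfl, rfl⟩
      have hirr2 : Irreflexive E2 := by
        rintro a (⟨rfl, hcon⟩ | ⟨rfl, hcon⟩) <;> exact nomatch hcon
      set L2 : Option (Option (Fin (c j))) → Q :=
        fun o => o.elim q'' (fun o' => o'.elim q' ρ.lastLab) with hL2
      have hbr2 : P.br (ρ2.lastLab none) m (L2 none) := by
        rw [hln2, hl1, hvq]
        exact hbr
      have hrcv2 : ∀ w, w ≠ (none : Option (Option (Fin (c j)))) →
          (E2 none w → P.rcv (ρ2.lastLab w) m (L2 w)) ∧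
          (¬ E2 none w → L2 w = ρ2.lastLab w) := by
        rintro (_ | (_ | u)) hw
        · exact absurd rfl hw
        · constructor
          · intro _
            rw [hl2, hln1, hvp]
            exact hrc
          · intro hne
            exact absurd (Or.inl ⟨rfl, rfl⟩) hne
        · constructor
          · rintro (⟨_, hcon⟩ | ⟨hcon, _⟩) <;> simp at hcon
          · intro _
            show ρ.lastLab u = _
            rw [hl2, hl1]
      set ρ3 := ρ2.snoc E2 hsymm2 hirr2 none m L2 hbr2 hrcv2 with hρ3
      have e : Fin (c (j + 1)) ≃ Option (Option (Fin (c j))) :=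
        (finCongr hc).trans ((finSuccEquiv (c j + 1)).trans
          (Equiv.optionCongr (finSuccEquiv (c j))))
      refine ⟨r2 + 1, ρ3.reindex e, ?_, ?_, ?_⟩
      · intro w
        rw [RExec.reindex_lastLab, hρ3, RExec.snoc_lastLab, hSj]
        rcases e w with _ | (_ | u)
        · exact Finset.mem_insert_of_mem hq''
        · exact Finset.mem_insert_self _ _
        · exact Finset.mem_insert_of_mem (hmem u)
      · intro x hx
        rw [hSj] at hx
        rcases Finset.mem_insert.mp hx with rfl | hx
        · refine ⟨e.symm (some none), ?_⟩
          rw [RExec.reindex_lastLab, hρ3, RExec.snoc_lastLab, Equiv.apply_symm_apply]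
          rfl
        · obtain ⟨u, hu⟩ := hsur x hx
          refine ⟨e.symm (some (some u)), ?_⟩
          rw [RExec.reindex_lastLab, hρ3, RExec.snoc_lastLab, Equiv.apply_symm_apply]
          exact hu
      · intro w
        rw [RExec.reindex_activeLen, hρ3, RExec.snoc_activeLen]
        rcases hew : e w with _ | (_ | u)
        · rw [if_pos rfl, han2, ha1]
          exact Nat.add_le_add (hact vq) le_rfl
        · rw [if_neg (fun hcon : (none : Option (Option (Fin (c j)))) = some none =>
            nomatch hcon), ha2, han1]
          exact le_trans (Nat.le_succ_of_le (hact vp)) (by omega)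
        · rw [if_neg (fun hcon : (none : Option (Option (Fin (c j)))) = some (some u) =>
            nomatch hcon), ha2, ha1]
          exact le_trans (Nat.le_succ_of_le (hact u)) (by omega)
end

section
/- Copycat property for lossy semantics: let ρ : γ_0 →_L γ_1 →_L ⋯ →_L γ_r be a lossy execution of a broadcast protocol B, with last configuration γ_r = (N, E, L). Then for every state q in the image of L and every node n^q ∈ N with L(n^q) = q, there exist s ∈ ℕ and a lossy execution ρ' : γ'_0 →_L ⋯ →_L γ'_s with last configuration γ'_s = (N', E', L') such that |N'| = |N| + 1, there is an injection ι : N → N' with L'(ι(n)) = L(n) for every n ∈ N, and the extra node n_f ∈ N' \ ι(N) satisfies: L'(n_f) = q; for every n ∈ N, (n_f, ι(n)) ∈ E' if and only if (n^q, n) ∈ E; a_{ρ'}(n_f) = a_ρ(n^q); and ra_{ρ'}(n_f) = 0. -/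
section Execs
variable {Q M : Type} [Fintype Q] [DecidableEq Q] [Fintype M]

/-- A lossy execution of length `r` over the finite node type `ν`: the communication
topology `E` is fixed throughout, and in the `i`-th step node `sender i` broadcasts
message `msg i`, which is lost (reaching no node) iff `lost i = true`. -/
structure LExec (P : BroadcastProtocol Q M) (ν : Type) [Fintype ν] [DecidableEq ν]
    (r : ℕ) where
  lab : Fin (r + 1) → ν → Q
  E : ν → ν → Prop
  E_symm : Symmetric E
  E_irrefl : Irreflexive E
  sender : Fin r → ν
  msg : Fin r → M
  lost : Fin r → Bool
  init : ∀ v, lab 0 v ∈ P.I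
  step_br : ∀ i : Fin r, P.br (lab i.castSucc (sender i)) (msg i) (lab i.succ (sender i))
  step_lost : ∀ i : Fin r, lost i = true → ∀ v, v ≠ sender i →
    lab i.succ v = lab i.castSucc v
  step_real : ∀ i : Fin r, lost i = false → ∀ v, v ≠ sender i →
    (E (sender i) v → P.rcv (lab i.castSucc v) (msg i) (lab i.succ v)) ∧
    (¬ E (sender i) v → lab i.succ v = lab i.castSucc v)

namespace LExec

variable {P : BroadcastProtocol Q M} {ν : Type} [Fintype ν] [DecidableEq ν] {r : ℕ}

/-- Labelling of the last configuration. -/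
def lastLab (ρ : LExec P ν r) : ν → Q := ρ.lab (Fin.last r)

/-- The execution covers `F` if a node of the last configuration is labelled in `F`. -/
def Covers (ρ : LExec P ν r) (F : Set Q) : Prop := ∃ v, ρ.lastLab v ∈ F

/-- The active length of node `v`: the number of broadcasts (lost or not) of `v`. -/
def activeLen (ρ : LExec P ν r) (v : ν) : ℕ :=
  (Finset.univ.filter fun i : Fin r => ρ.sender i = v).card

/-- The real active length of node `v`: the number of non-lost broadcasts of `v`. -/
def realActiveLen (ρ : LExec P ν r) (v : ν) : ℕ :=
  (Finset.univ.filter fun i : Fin r => ρ.sender i = v ∧ ρ.lost i = false).card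

end LExec

end Execs

section Aux
variable {Q M : Type} [Fintype Q] [DecidableEq Q] [Fintype M]
variable {P : BroadcastProtocol Q M} {ν : Type} [Fintype ν] [DecidableEq ν]

/-- Lift an edge relation on `ν` to `Option ν`, where `none` copies node `nq`. -/
def liftE (E : ν → ν → Prop) (nq : ν) : Option ν → Option ν → Prop :=
  fun a b => E (a.getD nq) (b.getD nq)

namespace LExec

/-- Drop the last step of an execution. -/
def restrict {r : ℕ} (ρ : LExec P ν (r + 1)) : LExec P ν r where
  lab := fun t => ρ.lab t.castSucc
  E := ρ.E
  E_symm := ρ.E_symm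
  E_irrefl := ρ.E_irrefl
  sender := fun i => ρ.sender i.castSucc
  msg := fun i => ρ.msg i.castSucc
  lost := fun i => ρ.lost i.castSucc
  init := fun v => by simpa using ρ.init v
  step_br := fun i => by
    simpa [Fin.succ_castSucc, -Fin.castSucc_succ] using ρ.step_br i.castSucc
  step_lost := fun i h v hv => by
    simpa [Fin.succ_castSucc, -Fin.castSucc_succ] using ρ.step_lost i.castSucc h v hv
  step_real := fun i h v hv => by
    simpa [Fin.succ_castSucc, -Fin.castSucc_succ] using ρ.step_real i.castSucc h v hv

/-- Append one step to an execution. -/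
def snoc {s : ℕ} (ρ : LExec P ν s) (ns : ν) (m : M) (l : Bool) (nl : ν → Q)
    (hbr : P.br (ρ.lastLab ns) m (nl ns))
    (hlost : l = true → ∀ v, v ≠ ns → nl v = ρ.lastLab v)
    (hreal : l = false → ∀ v, v ≠ ns →
      (ρ.E ns v → P.rcv (ρ.lastLab v) m (nl v)) ∧ (¬ ρ.E ns v → nl v = ρ.lastLab v)) :
    LExec P ν (s + 1) where
  lab := Fin.snoc ρ.lab nl
  E := ρ.E
  E_symm := ρ.E_symm
  E_irrefl := ρ.E_irrefl
  sender := Fin.snoc ρ.sender ns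
  msg := Fin.snoc ρ.msg m
  lost := Fin.snoc ρ.lost l
  init := fun v => by
    have h : (Fin.snoc ρ.lab nl : Fin (s + 2) → ν → Q) 0 = ρ.lab 0 := by
      rw [← Fin.castSucc_zero, Fin.snoc_castSucc]
    rw [h]; exact ρ.init v
  step_br := fun i => by
    refine Fin.lastCases ?_ ?_ i
    · simpa [Fin.succ_last, Fin.snoc_last, Fin.snoc_castSucc, lastLab] using hbr
    · intro j
      simpa [Fin.succ_castSucc, -Fin.castSucc_succ, Fin.snoc_castSucc] using ρ.step_br j
  step_lost := fun i => by
    refine Fin.lastCases ?_ ?_ i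
    · intro h v hv
      simp only [Fin.snoc_last] at h hv
      simpa [Fin.succ_last, Fin.snoc_last, Fin.snoc_castSucc, lastLab] using hlost h v hv
    · intro j h v hv
      simp only [Fin.snoc_castSucc] at h hv
      simpa [Fin.succ_castSucc, -Fin.castSucc_succ, Fin.snoc_castSucc] using ρ.step_lost j h v hv
  step_real := fun i => by
    refine Fin.lastCases ?_ ?_ i
    · intro h v hv
      simp only [Fin.snoc_last] at h hv
      simpa [Fin.succ_last, Fin.snoc_last, Fin.snoc_castSucc, lastLab] using hreal h v hv
    · intro j h v hv
      simp only [Fin.snoc_castSucc] at h hv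
      simpa [Fin.succ_castSucc, -Fin.castSucc_succ, Fin.snoc_castSucc] using ρ.step_real j h v hv

lemma snoc_lastLab {s : ℕ} (ρ : LExec P ν s) (ns m l nl hbr hlost hreal) :
    (snoc ρ ns m l nl hbr hlost hreal).lastLab = nl := by
  funext v
  simp [lastLab, snoc, Fin.snoc_last]

lemma snoc_E {s : ℕ} (ρ : LExec P ν s) (ns m l nl hbr hlost hreal) :
    (snoc ρ ns m l nl hbr hlost hreal).E = ρ.E := rfl

lemma snoc_activeLen {s : ℕ} (ρ : LExec P ν s) (ns m l nl hbr hlost hreal) (v : ν) :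
    (snoc ρ ns m l nl hbr hlost hreal).activeLen v
      = ρ.activeLen v + (if ns = v then 1 else 0) := by
  have h : (snoc ρ ns m l nl hbr hlost hreal).sender = Fin.snoc ρ.sender ns := rfl
  unfold activeLen
  rw [h, Finset.card_filter, Finset.card_filter, Fin.sum_univ_castSucc]
  simp [Fin.snoc_castSucc, Fin.snoc_last]

lemma snoc_realActiveLen {s : ℕ} (ρ : LExec P ν s) (ns m l nl hbr hlost hreal) (v : ν) :
    (snoc ρ ns m l nl hbr hlost hreal).realActiveLen v
      = ρ.realActiveLen v + (if ns = v ∧ l = false then 1 else 0) := by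
  have h1 : (snoc ρ ns m l nl hbr hlost hreal).sender = Fin.snoc ρ.sender ns := rfl
  have h2 : (snoc ρ ns m l nl hbr hlost hreal).lost = Fin.snoc ρ.lost l := rfl
  unfold realActiveLen
  rw [h1, h2, Finset.card_filter, Finset.card_filter, Fin.sum_univ_castSucc]
  simp [Fin.snoc_castSucc, Fin.snoc_last]

lemma activeLen_succ {r : ℕ} (ρ : LExec P ν (r + 1)) (v : ν) :
    ρ.activeLen v
      = ρ.restrict.activeLen v + (if ρ.sender (Fin.last r) = v then 1 else 0) := by
  have h : ρ.restrict.sender = fun i : Fin r => ρ.sender i.castSucc := rfl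
  unfold activeLen
  rw [h, Finset.card_filter, Finset.card_filter, Fin.sum_univ_castSucc]

end LExec

theorem copycat_aux (P : BroadcastProtocol Q M) {ν : Type} [Fintype ν] [DecidableEq ν] :
    ∀ (r : ℕ) (ρ : LExec P ν r) (nq : ν),
    ∃ (s : ℕ) (ρ' : LExec P (Option ν) s),
      ρ'.E = liftE ρ.E nq ∧
      (∀ n : ν, ρ'.lastLab (some n) = ρ.lastLab n) ∧
      ρ'.lastLab none = ρ.lastLab nq ∧
      ρ'.activeLen none = ρ.activeLen nq ∧
      ρ'.realActiveLen none = 0 := by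
  intro r
  induction r with
  | zero =>
    intro ρ nq
    refine ⟨0, {
      lab := fun _ o => ρ.lab 0 (o.getD nq)
      E := liftE ρ.E nq
      E_symm := fun a b h => ρ.E_symm h
      E_irrefl := fun a h => ρ.E_irrefl _ h
      sender := Fin.elim0
      msg := Fin.elim0
      lost := Fin.elim0
      init := fun v => ρ.init _
      step_br := fun i => i.elim0
      step_lost := fun i => i.elim0
      step_real := fun i => i.elim0 }, rfl, ?_, ?_, ?_, ?_⟩
    · intro n; rfl
    · rfl
    · simp [LExec.activeLen]
    · simp [LExec.realActiveLen]
  | succ r ih =>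
    intro ρ nq
    obtain ⟨s, ρ', hE, hsome, hnone, hact, hreal⟩ := ih ρ.restrict nq
    have hE0 : ρ.restrict.E = ρ.E := rfl
    rw [hE0] at hE
    have hL1 : ρ.lastLab = ρ.lab (Fin.last r).succ := by
      rw [Fin.succ_last]; rfl
    have hL0 : ∀ n : ν, ρ.restrict.lastLab n = ρ.lab (Fin.last r).castSucc n := fun _ => rfl
    have hbrj := ρ.step_br (Fin.last r)
    by_cases hs : ρ.sender (Fin.last r) = nq
    · -- the copied node broadcasts in the last step: add two steps
      rw [hs] at hbrj
      set nl1 : Option ν → Q :=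
        fun o => Option.elim o (ρ.lab (Fin.last r).succ nq) ρ.restrict.lastLab with hnl1
      set nl2 : Option ν → Q :=
        fun o => Option.elim o (ρ.lab (Fin.last r).succ nq) (ρ.lab (Fin.last r).succ) with hnl2
      have hbr1 : P.br (ρ'.lastLab none) (ρ.msg (Fin.last r)) (nl1 none) := by
        rw [hnone]; exact hbrj
      have hlost1 : (true : Bool) = true → ∀ v, v ≠ (none : Option ν) →
          nl1 v = ρ'.lastLab v := by
        rintro - (_ | n) hv
        · exact absurd rfl hv
        · exact (hsome n).symm
      set ρ1 := ρ'.snoc none (ρ.msg (Fin.last r)) true nl1 hbr1 hlost1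
        (fun h => by simp at h) with hρ1
      have hlast1 : ρ1.lastLab = nl1 := LExec.snoc_lastLab ..
      have hE1 : ρ1.E = liftE ρ.E nq := hE
      have hbr2 : P.br (ρ1.lastLab (some nq)) (ρ.msg (Fin.last r)) (nl2 (some nq)) := by
        rw [hlast1]; exact hbrj
      have hlost2 : ρ.lost (Fin.last r) = true → ∀ v, v ≠ some nq →
          nl2 v = ρ1.lastLab v := by
        rintro h (_ | n) hv
        · rw [hlast1]; rfl
        · rw [hlast1]
          have hn : n ≠ nq := fun e => hv (by rw [e])
          exact ρ.step_lost (Fin.last r) h n (fun e => hn (e.trans hs))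
      have hreal2 : ρ.lost (Fin.last r) = false → ∀ v, v ≠ some nq →
          (ρ1.E (some nq) v →
            P.rcv (ρ1.lastLab v) (ρ.msg (Fin.last r)) (nl2 v)) ∧
          (¬ ρ1.E (some nq) v → nl2 v = ρ1.lastLab v) := by
        rintro h (_ | n) hv
        · rw [hlast1, hE1]
          exact ⟨fun he => absurd he (ρ.E_irrefl nq), fun _ => rfl⟩
        · rw [hlast1, hE1]
          have hn : n ≠ nq := fun e => hv (by rw [e])
          have hrn := ρ.step_real (Fin.last r) h n (fun e => hn (e.trans hs))
          rw [hs] at hrn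
          exact ⟨fun he => hrn.1 he, fun he => hrn.2 he⟩
      refine ⟨s + 2, ρ1.snoc (some nq) (ρ.msg (Fin.last r)) (ρ.lost (Fin.last r))
        nl2 hbr2 hlost2 hreal2, hE1, ?_, ?_, ?_, ?_⟩
      · intro n
        rw [LExec.snoc_lastLab, hL1]; rfl
      · rw [LExec.snoc_lastLab, hL1]; rfl
      · rw [LExec.snoc_activeLen, hρ1, LExec.snoc_activeLen, hact,
          ρ.activeLen_succ nq, hs]
        simp
      · rw [LExec.snoc_realActiveLen, hρ1, LExec.snoc_realActiveLen, hreal]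
        simp
    · -- the copied node does not broadcast: add one step
      set nl : Option ν → Q :=
        fun o => Option.elim o (ρ.lab (Fin.last r).succ nq) (ρ.lab (Fin.last r).succ) with hnl
      have hbrA : P.br (ρ'.lastLab (some (ρ.sender (Fin.last r))))
          (ρ.msg (Fin.last r)) (nl (some (ρ.sender (Fin.last r)))) := by
        rw [hsome]; exact hbrj
      have hlostA : ρ.lost (Fin.last r) = true → ∀ v,
          v ≠ some (ρ.sender (Fin.last r)) → nl v = ρ'.lastLab v := by
        rintro h (_ | n) hv
        · rw [hnone]
          exact ρ.step_lost (Fin.last r) h nq (Ne.symm hs)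
        · rw [hsome]
          have hn : n ≠ ρ.sender (Fin.last r) := fun e => hv (by rw [e])
          exact ρ.step_lost (Fin.last r) h n hn
      have hrealA : ρ.lost (Fin.last r) = false → ∀ v,
          v ≠ some (ρ.sender (Fin.last r)) →
          (ρ'.E (some (ρ.sender (Fin.last r))) v →
            P.rcv (ρ'.lastLab v) (ρ.msg (Fin.last r)) (nl v)) ∧
          (¬ ρ'.E (some (ρ.sender (Fin.last r))) v → nl v = ρ'.lastLab v) := by
        rintro h (_ | n) hv
        · rw [hnone, hE]
          have hrn := ρ.step_real (Fin.last r) h nq (Ne.symm hs)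
          exact ⟨fun he => hrn.1 he, fun he => hrn.2 he⟩
        · rw [hsome, hE]
          have hn : n ≠ ρ.sender (Fin.last r) := fun e => hv (by rw [e])
          have hrn := ρ.step_real (Fin.last r) h n hn
          exact ⟨fun he => hrn.1 he, fun he => hrn.2 he⟩
      refine ⟨s + 1, ρ'.snoc (some (ρ.sender (Fin.last r))) (ρ.msg (Fin.last r))
        (ρ.lost (Fin.last r)) nl hbrA hlostA hrealA, hE, ?_, ?_, ?_, ?_⟩
      · intro n
        rw [LExec.snoc_lastLab, hL1]; rfl
      · rw [LExec.snoc_lastLab, hL1]; rfl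
      · rw [LExec.snoc_activeLen, hact, ρ.activeLen_succ nq]
        simp [hs]
      · rw [LExec.snoc_realActiveLen, hreal]
        simp

end Aux

/-- **Copycat property for lossy semantics.** Given a lossy execution `ρ` whose last
configuration labels the node `nq` with the state `q`, there is a lossy execution
`ρ'` of some length `s` over the node set `Option ν` (one more node), such that the
injection `some : ν → Option ν` preserves the final labels, the extra node `none`
ends labelled `q`, is connected to `some n` exactly when `nq` is connected to `n`
in `ρ`, has the same active length as `nq`, and performs no real (non-lost)
broadcast. -/
theorem copycat_lossy
    {Q M : Type} [Fintype Q] [DecidableEq Q] [Fintype M]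
    (P : BroadcastProtocol Q M) (ν : Type) [Fintype ν] [DecidableEq ν]
    (r : ℕ) (ρ : LExec P ν r) (q : Q) (nq : ν) (hnq : ρ.lastLab nq = q) :
    ∃ (s : ℕ) (ρ' : LExec P (Option ν) s),
      Fintype.card (Option ν) = Fintype.card ν + 1 ∧
      Function.Injective (some : ν → Option ν) ∧
      (∀ n : ν, ρ'.lastLab (some n) = ρ.lastLab n) ∧
      ρ'.lastLab none = q ∧
      (∀ n : ν, ρ'.E none (some n) ↔ ρ.E nq n) ∧
      ρ'.activeLen none = ρ.activeLen nq ∧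
      ρ'.realActiveLen none = 0 := by
  obtain ⟨s, ρ', hE, hsome, hnone, hact, hreal⟩ := copycat_aux P r ρ nq
  refine ⟨s, ρ', by simp, Option.some_injective ν, hsome, by rw [hnone, hnq], fun n => by rw [hE]; exact Iff.rfl, hact, hreal⟩
end
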